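/- Let F : C → D be an additive functor between additive categories. If F is an epimorphism of additive categories (i.e., for any pair of additive functors G, G' : D → E, G ∘ F = G' ∘ F implies G = G'), then F is surjective on objects. -/

import Mathlib

open CategoryTheory

universe v₃ u₃ v₁ v₂ u₁ u₂

/-- A tiny category with two objects and trivial hom-groups. -/
def TwoObj : Type u₃ := ULift Bool

instance : Category.{v₃} TwoObj.{u₃} where
  Hom _ _ := PUnit
  id _ := ⟨⟩
  comp _ _ := ⟨⟩

instance : Preadditive TwoObj.{u₃} where
  homGroup _ _ := inferInstanceAs (AddCommGroup PUnit)
  add_comp := by intros; rfl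
  comp_add := by intros; rfl

/-- Any function on objects gives a functor into `TwoObj`. -/
def toTwoObj {D : Type u₂} [Category.{v₂} D] (f : D → Bool) : D ⥤ TwoObj.{u₃} where
  obj x := ULift.up (f x)
  map _ := ⟨⟩

instance {D : Type u₂} [Category.{v₂} D] [Preadditive D] (f : D → Bool) :
    (toTwoObj f).Additive where
  map_add := rfl

/-- If `F : C ⥤ D` is an epimorphism of additive categories (composition with `F` is
injective on additive functors out of `D`), then `F` is surjective on objects. -/
theorem stmt0 {C : Type u₁} [Category.{v₁} C] [Preadditive C]
    {D : Type u₂} [Category.{v₂} D] [Preadditive D]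
    (F : C ⥤ D) [F.Additive]
    (hepi : ∀ {E : Type u₃} [Category.{v₃} E] [Preadditive E]
      (G G' : D ⥤ E), G.Additive → G'.Additive → F ⋙ G = F ⋙ G' → G = G') :
    ∀ d : D, ∃ c : C, F.obj c = d := by
  intro d
  by_contra h
  push_neg at h
  classical
  let G : D ⥤ TwoObj.{u₃} := toTwoObj fun _ => true
  let G' : D ⥤ TwoObj.{u₃} := toTwoObj fun x => if x = d then false else true
  have hcomp : F ⋙ G = F ⋙ G' := by
    refine CategoryTheory.Functor.ext (fun c => ?_) (fun X Y f => ?_)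
    · simp only [Functor.comp_obj, G, G', toTwoObj, if_neg (h c)]; rfl
    · exact Subsingleton.elim (α := PUnit) _ _
  have := hepi G G' inferInstance inferInstance hcomp
  have hobj : G.obj d = G'.obj d := by rw [this]
  simp only [G, G', toTwoObj, if_pos rfl] at hobj
  exact absurd (congrArg ULift.down hobj) (by decide)
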